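/- Reconstruction of path sums on a grid: given any target values x ∈ {0, ..., 2^b − 1}^{m×m} with 2^b ≤ n², there exists an assignment δ : {0,...,m−1}² → ℤ with |δ_{i,j}| ≤ 2m·n² for all i, j, such that for every (i, j), the sum of δ along the up-then-right path from (i, 0) to (0, j) — namely Σ_{y=0}^{j} δ_{i,y} + Σ_{x=0}^{i−1} δ_{x,j} — equals x_{i,j}. -/
import Mathlib

private def gridDelta (x : ℕ → ℕ → ℕ) : ℕ → ℕ → ℤ
  | 0, 0 => (x 0 0 : ℤ)
  | 0, j+1 => (x 0 (j+1) : ℤ) - (x 0 j : ℤ)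
  | i+1, 0 => (x (i+1) 0 : ℤ) - (x i 0 : ℤ)
  | i+1, j+1 => gridDelta x i j + ((x (i+1) (j+1) : ℤ) + (x i j : ℤ))
      - ((x (i+1) j : ℤ) + (x i (j+1) : ℤ))

private lemma gridA0 (x : ℕ → ℕ → ℕ) (j : ℕ) :
    ∑ y ∈ Finset.range (j+1), gridDelta x 0 y = (x 0 j : ℤ) := by
  induction j with
  | zero => simp [gridDelta]
  | succ j ih =>
      rw [Finset.sum_range_succ, ih]
      show (x 0 j : ℤ) + gridDelta x 0 (j+1) = _
      simp [gridDelta]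

private lemma gridAstep (x : ℕ → ℕ → ℕ) (i j : ℕ) :
    ∑ y ∈ Finset.range (j+2), gridDelta x (i+1) y
      = (x (i+1) (j+1) : ℤ) - (x i (j+1) : ℤ) + ∑ y ∈ Finset.range (j+1), gridDelta x i y := by
  induction j with
  | zero =>
      simp only [Finset.sum_range_succ, Finset.sum_range_zero, Finset.sum_range_one, zero_add]
      simp only [gridDelta]
      ring
  | succ j ih =>
      rw [Finset.sum_range_succ, ih]
      rw [show (j+1+1) = j+2 from rfl, Finset.sum_range_succ (fun y => gridDelta x i y) (j+1)]
      simp only [gridDelta]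
      ring

private lemma gridMain (x : ℕ → ℕ → ℕ) (i j : ℕ) :
    (∑ y ∈ Finset.range (j + 1), gridDelta x i y)
      + (∑ x' ∈ Finset.range i, gridDelta x x' j) = (x i j : ℤ) := by
  induction i generalizing j with
  | zero => simpa using gridA0 x j
  | succ i ih =>
      rw [Finset.sum_range_succ (fun x' => gridDelta x x' j) i]
      have hB : (∑ x' ∈ Finset.range i, gridDelta x x' j)
          = (x i j : ℤ) - ∑ y ∈ Finset.range (j + 1), gridDelta x i y := by
        have := ih j; linarith
      rw [hB]
      cases j with
      | zero =>
          simp only [Finset.sum_range_succ, Finset.sum_range_zero, zero_add]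
          simp only [gridDelta]
          ring
      | succ j =>
          rw [gridAstep x i j]
          rw [show Finset.range (j+1+1) = Finset.range (j+2) from rfl]
          rw [show (∑ y ∈ Finset.range (j + 2), gridDelta x i y)
              = (∑ y ∈ Finset.range (j+1), gridDelta x i y) + gridDelta x i (j+1) from
            Finset.sum_range_succ _ _]
          ring

private lemma gridBound (x : ℕ → ℕ → ℕ) (m : ℕ) (N : ℤ)
    (hx : ∀ i j, i < m → j < m → (x i j : ℤ) < N) :
    ∀ i j, i < m → j < m → |gridDelta x i j| ≤ (2 * min i j + 1) * N := by
  intro i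
  induction i with
  | zero =>
      intro j hi hj
      have hN0 : (0:ℤ) ≤ N := le_of_lt (lt_of_le_of_lt (Nat.cast_nonneg _) (hx 0 j hi hj))
      cases j with
      | zero =>
          have h1 := hx 0 0 hi hj
          simp only [gridDelta, Nat.min_self, Nat.cast_zero]
          rw [abs_of_nonneg (Nat.cast_nonneg _)]
          nlinarith
      | succ j =>
          have h1 := hx 0 (j+1) hi hj
          have h2 := hx 0 j hi (by omega)
          have h3 : (0:ℤ) ≤ (x 0 (j+1) : ℤ) := Nat.cast_nonneg _
          have h4 : (0:ℤ) ≤ (x 0 j : ℤ) := Nat.cast_nonneg _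
          simp only [gridDelta, Nat.zero_min, Nat.cast_zero]
          rw [abs_le]
          constructor <;> nlinarith
  | succ i ihi =>
      intro j hi hj
      have hN0 : (0:ℤ) ≤ N := le_of_lt (lt_of_le_of_lt (Nat.cast_nonneg _) (hx _ _ hi hj))
      cases j with
      | zero =>
          have h1 := hx (i+1) 0 hi hj
          have h2 := hx i 0 (by omega) hj
          have h3 : (0:ℤ) ≤ (x (i+1) 0 : ℤ) := Nat.cast_nonneg _
          have h4 : (0:ℤ) ≤ (x i 0 : ℤ) := Nat.cast_nonneg _
          simp only [gridDelta, Nat.min_zero, Nat.cast_zero]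
          rw [abs_le]
          constructor <;> nlinarith
      | succ j =>
          have ih := ihi j (by omega) (by omega)
          have h1 := hx (i+1) (j+1) hi hj
          have h2 := hx i j (by omega) (by omega)
          have h3 := hx (i+1) j hi (by omega)
          have h4 := hx i (j+1) (by omega) hj
          have p1 : (0:ℤ) ≤ (x (i+1) (j+1) : ℤ) := Nat.cast_nonneg _
          have p2 : (0:ℤ) ≤ (x i j : ℤ) := Nat.cast_nonneg _
          have p3 : (0:ℤ) ≤ (x (i+1) j : ℤ) := Nat.cast_nonneg _
          have p4 : (0:ℤ) ≤ (x i (j+1) : ℤ) := Nat.cast_nonneg _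
          have hmin : (min (i+1) (j+1) : ℕ) = min i j + 1 := by omega
          rw [hmin]
          have habs : |gridDelta x (i+1) (j+1)|
              ≤ |gridDelta x i j| + |((x (i+1) (j+1) : ℤ) + (x i j : ℤ))
                  - ((x (i+1) j : ℤ) + (x i (j+1) : ℤ))| := by
            show |gridDelta x i j + ((x (i+1) (j+1) : ℤ) + (x i j : ℤ))
                - ((x (i+1) j : ℤ) + (x i (j+1) : ℤ))| ≤ _
            rw [add_sub_assoc]
            exact abs_add_le _ _
          have hD : |((x (i+1) (j+1) : ℤ) + (x i j : ℤ))
              - ((x (i+1) j : ℤ) + (x i (j+1) : ℤ))| ≤ 2 * N := by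
            rw [abs_le]; constructor <;> nlinarith
          have : ((min i j : ℕ) : ℤ) ≥ 0 := Nat.cast_nonneg _
          push_cast
          push_cast at ih
          nlinarith

/-- Reconstruction of path sums on a grid: for any targets `x i j ∈ {0,…,2^b−1}` there is an
assignment `δ` with `|δ i j| ≤ 2·m·n²` whose sum along the up-then-right path from `(i,0)` to
`(0,j)` equals `x i j`. -/
theorem grid_path_sum_reconstruction (m b n : ℕ) (hm : 1 ≤ m) (hbn : 2 ^ b ≤ n ^ 2)
    (x : ℕ → ℕ → ℕ) (hx : ∀ i j, i < m → j < m → x i j < 2 ^ b) :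
    ∃ δ : ℕ → ℕ → ℤ,
      (∀ i j, i < m → j < m → |δ i j| ≤ 2 * (m : ℤ) * (n : ℤ) ^ 2) ∧
      (∀ i j, i < m → j < m →
        (∑ y ∈ Finset.range (j + 1), δ i y) + (∑ x' ∈ Finset.range i, δ x' j)
          = (x i j : ℤ)) := by
  refine ⟨gridDelta x, ?_, fun i j _ _ => gridMain x i j⟩
  intro i j hi hj
  have hx' : ∀ i j, i < m → j < m → (x i j : ℤ) < ((n:ℤ)^2) := by
    intro i j hi hj
    have := lt_of_lt_of_le (hx i j hi hj) hbn
    exact_mod_cast this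
  have hb := gridBound x m ((n:ℤ)^2) hx' i j hi hj
  have hN0 : (0:ℤ) ≤ (n:ℤ)^2 := by positivity
  have hcoef : ((2 * min i j + 1 : ℕ) : ℤ) ≤ 2 * (m : ℤ) := by
    have : 2 * min i j + 1 ≤ 2 * m := by omega
    exact_mod_cast this
  calc |gridDelta x i j| ≤ (2 * min i j + 1) * (n:ℤ)^2 := hb
    _ ≤ 2 * (m : ℤ) * (n:ℤ)^2 := by
        apply mul_le_mul_of_nonneg_right _ hN0
        exact_mod_cast hcoef
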